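/- Let n be even, not a power of 2. Then there exist signs ε_v ∈ {-1,1} for each v ∈ V₀ = { v ∈ {-1,1}ⁿ : v₁ = 1, Σ_i v_i = 0 } such that Σ_{v∈V₀} ε_v·v = 0. -/

import Mathlib

lemma two_dvd_choose_aux (m : ℕ) (hm : 3 ≤ m) (hnp : ∀ k : ℕ, m ≠ 2 ^ k) :
    2 ∣ (2 * m - 1).choose (m - 1) := by
  have h2 : Nat.Prime 2 := Nat.prime_two
  set j := Nat.log 2 m with hj
  have hjm : 2 ^ j ≤ m := Nat.pow_log_le_self 2 (by omega)
  have hmj : m < 2 ^ (j + 1) := Nat.lt_pow_succ_log_self (by norm_num) m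
  have hmgt : 2 ^ j < m := lt_of_le_of_ne hjm (fun h => hnp j h.symm)
  have hpow : (2:ℕ) ^ (j+1) = 2 * 2 ^ j := by ring
  have hb : Nat.log 2 (2 * m - 1) < j + 2 := by
    apply Nat.log_lt_of_lt_pow (by omega)
    have : (2:ℕ) ^ (j+2) = 4 * 2 ^ j := by ring
    omega
  have hkn : m - 1 ≤ 2 * m - 1 := by omega
  have hmul := Nat.Prime.emultiplicity_choose h2 hkn hb
  have hmem : (j+1) ∈ (Finset.Ico 1 (j+2)).filter
      (fun i => 2 ^ i ≤ (m-1) % 2 ^ i + (2*m-1 - (m-1)) % 2 ^ i) := by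
    have h1 : 2*m-1 - (m-1) = m := by omega
    have h2' : m % 2 ^ (j+1) = m := Nat.mod_eq_of_lt hmj
    have h3 : (m-1) % 2 ^ (j+1) = m - 1 := Nat.mod_eq_of_lt (by omega)
    simp only [Finset.mem_filter, Finset.mem_Ico, h1, h2', h3]
    omega
  have hcard : 1 ≤ ((Finset.Ico 1 (j+2)).filter
      (fun i => 2 ^ i ≤ (m-1) % 2 ^ i + (2*m-1 - (m-1)) % 2 ^ i)).card :=
    Finset.card_pos.mpr ⟨_, hmem⟩
  have hle : (1:ℕ∞) ≤ emultiplicity 2 ((2*m-1).choose (m-1)) := by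
    rw [hmul]
    exact_mod_cast Nat.one_le_cast.mpr hcard
  have := pow_dvd_of_le_emultiplicity hle
  simpa using this

section Aux

variable {n : ℕ}

private def zF (hn : 6 ≤ n) : Fin n := ⟨0, by omega⟩

private def eF (hn : 6 ≤ n) [NeZero (n-1)] (x : ZMod (n-1)) : Fin n :=
  ⟨x.val + 1, by have := ZMod.val_lt x; omega⟩

private def dF (i : Fin n) : ZMod (n-1) := ((i.val - 1 : ℕ) : ZMod (n-1))

variable (hn : 6 ≤ n) [NeZero (n-1)]

private lemma eF_ne (x : ZMod (n-1)) : eF hn x ≠ zF hn := by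
  intro h
  have : (eF hn x).val = (zF hn).val := by rw [h]
  simp [eF, zF] at this

private lemma dF_eF (x : ZMod (n-1)) : dF (eF hn x) = x := by
  have : (eF hn x).val - 1 = x.val := by simp [eF]
  rw [dF, this, ZMod.natCast_val, ZMod.cast_id]

private lemma eF_dF (i : Fin n) (hi : i ≠ zF hn) : eF hn (dF i) = i := by
  have h1 : 1 ≤ i.val := by
    by_contra h
    exact hi (Fin.ext (by simp [zF]; omega))
  have h2 : i.val - 1 < n - 1 := by have := i.2; omega
  have : (dF i).val = i.val - 1 := by rw [dF, ZMod.val_natCast, Nat.mod_eq_of_lt h2]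
  apply Fin.ext
  simp [eF, this]
  omega

private noncomputable def EQo : Option (ZMod (n-1)) ≃ Fin n := by
  apply Equiv.ofBijective (fun o => o.elim (zF hn) (eF hn))
  constructor
  · rintro (_|x) (_|y) h
    · rfl
    · exact absurd h.symm (eF_ne hn y)
    · exact absurd h (eF_ne hn x)
    · simp only [Option.elim] at h
      have : x.val = y.val := by
        have := congrArg Fin.val h
        simpa [eF] using this
      exact congrArg some (ZMod.val_injective _ this)
  · intro i
    by_cases hi : i = zF hn
    · exact ⟨none, hi.symm⟩
    · exact ⟨some (dF i), eF_dF hn i hi⟩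

private lemma sum_decomp (g : Fin n → ℝ) :
    ∑ i, g i = g (zF hn) + ∑ x : ZMod (n-1), g (eF hn x) := by
  rw [← Equiv.sum_comp (EQo hn) g, Fintype.sum_option]
  rfl


private def TF (hn : 6 ≤ n) [NeZero (n-1)] (k : ZMod (n-1)) (v : Fin n → ℝ) : Fin n → ℝ :=
  fun i => if i = zF hn then v (zF hn) else v (eF hn (dF i + k))

private lemma TF_z (k : ZMod (n-1)) (v : Fin n → ℝ) : TF hn k v (zF hn) = v (zF hn) := by
  simp [TF]

private lemma TF_e (k : ZMod (n-1)) (v : Fin n → ℝ) (x : ZMod (n-1)) :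
    TF hn k v (eF hn x) = v (eF hn (x + k)) := by
  rw [TF, if_neg (eF_ne hn x), dF_eF]

private lemma TF_comp (k l : ZMod (n-1)) (v : Fin n → ℝ) :
    TF hn k (TF hn l v) = TF hn (k + l) v := by
  funext i
  by_cases hi : i = zF hn
  · simp [TF, hi]
  · rw [TF, if_neg hi, TF_e, TF, if_neg hi, add_assoc]

private lemma TF_zero (v : Fin n → ℝ) : TF hn 0 v = v := by
  funext i
  by_cases hi : i = zF hn
  · simp [TF, hi]
  · rw [TF, if_neg hi, add_zero, eF_dF hn i hi]

private lemma TF_inj (v : Fin n → ℝ) (hfree : ∀ k, TF hn k v = v → k = 0) :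
    Function.Injective (fun k => TF hn k v) := by
  intro k l h
  simp only at h
  have h2 : TF hn (-l) (TF hn k v) = TF hn (-l) (TF hn l v) := by rw [h]
  rw [TF_comp, TF_comp, neg_add_cancel, TF_zero] at h2
  have := hfree _ h2
  have : -l + k = 0 := this
  linear_combination (norm := abel) this

private def Good (hn : 6 ≤ n) (v : Fin n → ℝ) : Prop :=
  (∀ i, v i = 1 ∨ v i = -1) ∧ v (zF hn) = 1 ∧ (∑ i, v i) = 0

private lemma rest_sum (v : Fin n → ℝ) (hv : Good hn v) :
    ∑ x : ZMod (n-1), v (eF hn x) = -1 := by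
  have := sum_decomp hn v
  rw [hv.2.2, hv.2.1] at this
  linarith

private lemma TF_good (k : ZMod (n-1)) (v : Fin n → ℝ) (hv : Good hn v) :
    Good hn (TF hn k v) := by
  obtain ⟨h1, h2, h3⟩ := hv
  refine ⟨?_, ?_, ?_⟩
  · intro i
    by_cases hi : i = zF hn
    · rw [hi, TF_z]; exact h1 _
    · rw [TF, if_neg hi]; exact h1 _
  · rw [TF_z]; exact h2
  · rw [sum_decomp hn, TF_z]
    have : ∑ x : ZMod (n-1), TF hn k v (eF hn x) = ∑ x : ZMod (n-1), v (eF hn x) := by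
      rw [Fintype.sum_equiv (Equiv.addRight k) _ (fun x => v (eF hn x))]
      intro x
      rw [TF_e]
      rfl
    rw [this, h2]
    linarith [rest_sum hn v ⟨h1, h2, h3⟩]

private lemma Scard (v : Fin n → ℝ) (hv : Good hn v) :
    2 * (Finset.univ.filter fun x : ZMod (n-1) => v (eF hn x) = 1).card = n - 2 := by
  set S := Finset.univ.filter fun x : ZMod (n-1) => v (eF hn x) = 1 with hS
  have hsplit := Finset.sum_filter_add_sum_filter_not Finset.univ
    (fun x : ZMod (n-1) => v (eF hn x) = 1) (fun x => v (eF hn x))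
  have h1 : ∑ x ∈ S, v (eF hn x) = (S.card : ℝ) := by
    rw [Finset.sum_congr rfl (fun x hx => (Finset.mem_filter.mp hx).2)]
    simp
    rfl
  have h2 : ∑ x ∈ Finset.univ.filter (fun x : ZMod (n-1) => ¬ v (eF hn x) = 1),
      v (eF hn x) = -(((n-1) - S.card : ℕ) : ℝ) := by
    have hc : (Finset.univ.filter (fun x : ZMod (n-1) => ¬ v (eF hn x) = 1)).card
        = (n-1) - S.card := by
      have := Finset.card_filter_add_card_filter_not
        (s := (Finset.univ : Finset (ZMod (n-1)))) (p := fun x => v (eF hn x) = 1)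
      rw [Finset.card_univ, ZMod.card, ← hS] at this
      omega
    have hall : ∀ x ∈ Finset.univ.filter (fun x : ZMod (n-1) => ¬ v (eF hn x) = 1),
        v (eF hn x) = -1 := by
      intro x hx
      have := hv.1 (eF hn x)
      have hx2 := (Finset.mem_filter.mp hx).2
      tauto
    rw [Finset.sum_congr rfl hall, Finset.sum_const, hc]
    simp
  rw [h1, h2, rest_sum hn v hv] at hsplit
  have hcle : S.card ≤ n - 1 := by
    have := Finset.card_filter_le (Finset.univ : Finset (ZMod (n-1)))
      (fun x => v (eF hn x) = 1)
    rwa [Finset.card_univ, ZMod.card] at this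
  rw [Nat.cast_sub hcle, Nat.cast_sub (by omega : 1 ≤ n)] at hsplit
  push_cast at hsplit
  have : ((2 * S.card : ℕ) : ℝ) = ((n - 2 : ℕ) : ℝ) := by
    rw [Nat.cast_sub (by omega : 2 ≤ n)]
    push_cast
    linarith
  exact_mod_cast this

private lemma TF_free (v : Fin n → ℝ) (hv : Good hn v) (k : ZMod (n-1))
    (h : TF hn k v = v) : k = 0 := by
  set S := Finset.univ.filter fun x : ZMod (n-1) => v (eF hn x) = 1 with hS
  have hshift : ∀ x : ZMod (n-1), v (eF hn (x + k)) = v (eF hn x) := by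
    intro x
    conv_rhs => rw [← h]
    rw [TF_e]
  have himg : S.image (· + k) = S := by
    apply Finset.eq_of_subset_of_card_le
    · intro y hy
      obtain ⟨x, hx, rfl⟩ := Finset.mem_image.mp hy
      simp only [hS, Finset.mem_filter, Finset.mem_univ, true_and] at hx ⊢
      rw [hshift]; exact hx
    · rw [Finset.card_image_of_injective _ (add_left_injective k)]
  have hsum : ∑ x ∈ S, x = (∑ x ∈ S, x) + S.card • k := by
    conv_lhs => rw [← himg]
    rw [Finset.sum_image (fun x _ y _ => by exact fun hxy => add_left_injective k hxy)]
    rw [Finset.sum_add_distrib, Finset.sum_const]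
  have hz : (S.card : ZMod (n-1)) * k = 0 := by
    have : S.card • k = 0 := by linear_combination (norm := abel) hsum.symm
    rwa [nsmul_eq_mul] at this
  have hcop : Nat.Coprime S.card (n-1) := by
    have hcard := Scard hn v hv
    rw [← hS] at hcard
    obtain ⟨c, hc⟩ : ∃ c, c = S.card := ⟨_, rfl⟩
    rw [← hc] at hcard ⊢
    have h2 : n - 1 = 1 + c * 2 := by omega
    rw [h2]
    simpa using (Nat.coprime_add_mul_right_right c 1 2).mpr (Nat.coprime_one_right c)
  have hunit : IsUnit ((S.card : ZMod (n-1))) := (ZMod.isUnit_iff_coprime _ _).mpr hcop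
  exact (hunit.mul_right_eq_zero).mp hz

private noncomputable def OrbF (hn : 6 ≤ n) [NeZero (n-1)] (v : Fin n → ℝ) :
    Finset (Fin n → ℝ) :=
  letI := Classical.decEq (Fin n → ℝ)
  Finset.image (fun k : ZMod (n-1) => TF hn k v) Finset.univ

private lemma mem_OrbF_self (v : Fin n → ℝ) : v ∈ OrbF hn v := by
  rw [OrbF]
  letI := Classical.decEq (Fin n → ℝ)
  exact Finset.mem_image.mpr ⟨0, Finset.mem_univ _, TF_zero hn v⟩

private lemma OrbF_card (v : Fin n → ℝ) (hv : Good hn v) : (OrbF hn v).card = n - 1 := by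
  rw [OrbF]
  letI := Classical.decEq (Fin n → ℝ)
  rw [Finset.card_image_of_injective _ (TF_inj hn v (TF_free hn v hv)), Finset.card_univ,
    ZMod.card]

private lemma OrbF_good (v w : Fin n → ℝ) (hv : Good hn v) (hw : w ∈ OrbF hn v) :
    Good hn w := by
  rw [OrbF] at hw
  letI := Classical.decEq (Fin n → ℝ)
  obtain ⟨k, _, rfl⟩ := Finset.mem_image.mp hw
  exact TF_good hn k v hv

private lemma OrbF_shift (v : Fin n → ℝ) (k : ZMod (n-1)) :
    OrbF hn (TF hn k v) = OrbF hn v := by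
  letI := Classical.decEq (Fin n → ℝ)
  ext w
  simp only [OrbF, Finset.mem_image, Finset.mem_univ, true_and]
  constructor
  · rintro ⟨l, rfl⟩
    exact ⟨l + k, (TF_comp hn l k v).symm⟩
  · rintro ⟨l, rfl⟩
    exact ⟨l - k, by rw [TF_comp, sub_add_cancel]⟩

private lemma OrbF_eq_of_mem (v w : Fin n → ℝ) (hw : w ∈ OrbF hn v) :
    OrbF hn w = OrbF hn v := by
  rw [OrbF] at hw
  letI := Classical.decEq (Fin n → ℝ)
  obtain ⟨k, _, rfl⟩ := Finset.mem_image.mp hw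
  exact OrbF_shift hn v k

private lemma OrbF_sum (v : Fin n → ℝ) (hv : Good hn v) :
    ∑ w ∈ OrbF hn v, w = fun i => if i = zF hn then ((n-1 : ℕ) : ℝ) else -1 := by
  letI := Classical.decEq (Fin n → ℝ)
  rw [OrbF, Finset.sum_image (fun a _ b _ h => TF_inj hn v (TF_free hn v hv) h)]
  funext i
  rw [Finset.sum_apply]
  by_cases hi : i = zF hn
  · rw [if_pos hi, hi]
    simp only [TF_z]
    rw [Finset.sum_const, Finset.card_univ, ZMod.card, hv.2.1]
    simp
  · rw [if_neg hi]
    have hT : ∀ k : ZMod (n-1), TF hn k v i = v (eF hn (dF i + k)) := fun k => by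
      rw [TF, if_neg hi]
    simp only [hT]
    have hr := rest_sum hn v hv
    rw [← hr]
    exact Fintype.sum_equiv (Equiv.addLeft (dF i)) _ _ (fun k => rfl)

private lemma good_card (hev : 2 ∣ n) (V : Finset (Fin n → ℝ)) (hV : ∀ v, v ∈ V ↔ Good hn v) :
    V.card = (n-1).choose ((n-2)/2) := by
  have h := Finset.card_nbij'
    (i := fun (v : Fin n → ℝ) => Finset.univ.filter (fun x : ZMod (n-1) => v (eF hn x) = 1))
    (j := fun (A : Finset (ZMod (n-1))) => (fun i => if i = zF hn then (1:ℝ)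
      else if dF i ∈ A then 1 else -1))
    (s := V) (t := Finset.powersetCard ((n-2)/2) Finset.univ)
    ?_ ?_ ?_ ?_
  · rw [h, Finset.card_powersetCard, Finset.card_univ, ZMod.card]
  · intro v hv
    rw [Finset.mem_coe, Finset.mem_powersetCard]
    beta_reduce
    refine ⟨Finset.filter_subset _ _ |>.trans (Finset.subset_univ _), ?_⟩
    have := Scard hn v ((hV v).mp hv)
    omega
  · intro A hA
    rw [Finset.mem_coe, Finset.mem_powersetCard] at hA
    rw [Finset.mem_coe, hV]
    beta_reduce
    refine ⟨?_, ?_, ?_⟩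
    · intro i
      by_cases hi : i = zF hn
      · simp [hi]
      · by_cases hA' : dF i ∈ A <;> simp [hi, hA']
    · simp
    · rw [sum_decomp hn]
      beta_reduce
      rw [if_pos rfl]
      have he : ∀ x : ZMod (n-1), (if eF hn x = zF hn then (1:ℝ)
          else if dF (eF hn x) ∈ A then 1 else -1) = (if x ∈ A then (1:ℝ) else -1) := by
        intro x
        rw [if_neg (eF_ne hn x), dF_eF]
      rw [Finset.sum_congr rfl (fun x _ => he x)]
      have hsplit := Finset.sum_filter_add_sum_filter_not Finset.univ
        (fun x : ZMod (n-1) => x ∈ A) (fun x => if x ∈ A then (1:ℝ) else -1)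
      rw [Finset.filter_univ_mem] at hsplit
      have e1 : ∑ x ∈ A, (if x ∈ A then (1:ℝ) else -1) = (A.card : ℝ) := by
        rw [Finset.sum_congr rfl (fun x hx => if_pos hx), Finset.sum_const]
        simp
      have e2 : ∑ x ∈ Finset.univ.filter (fun x : ZMod (n-1) => ¬ x ∈ A),
          (if x ∈ A then (1:ℝ) else -1) = -(((n-1) - A.card : ℕ) : ℝ) := by
        have hc : (Finset.univ.filter (fun x : ZMod (n-1) => ¬ x ∈ A)).card
            = (n-1) - A.card := by
          have h2 := Finset.card_filter_add_card_filter_not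
            (s := (Finset.univ : Finset (ZMod (n-1)))) (p := fun x : ZMod (n-1) => x ∈ A)
          rw [Finset.card_univ, ZMod.card, Finset.filter_univ_mem] at h2
          omega
        rw [Finset.sum_congr rfl (fun x hx => if_neg (Finset.mem_filter.mp hx).2),
          Finset.sum_const, hc]
        simp
      rw [e1, e2] at hsplit
      rw [← hsplit]
      have hAcard : A.card = (n-2)/2 := hA.2
      have hle : A.card ≤ n - 1 := by
        have := Finset.card_le_card hA.1
        rwa [Finset.card_univ, ZMod.card] at this
      rw [Nat.cast_sub hle, Nat.cast_sub (by omega : 1 ≤ n), hAcard]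
      have h2' : (((n-2)/2) * 2 : ℕ) = n - 2 := by omega
      have hcast : (((n-2)/2 : ℕ) : ℝ) * 2 = (n : ℝ) - 2 := by
        calc (((n-2)/2 : ℕ) : ℝ) * 2 = ((((n-2)/2) * 2 : ℕ) : ℝ) := by push_cast; ring
        _ = ((n - 2 : ℕ) : ℝ) := by rw [h2']
        _ = (n : ℝ) - 2 := by rw [Nat.cast_sub (by omega : 2 ≤ n)]; norm_num
      push_cast
      linarith
  · intro v hv
    have hgood := (hV v).mp hv
    funext i
    beta_reduce
    by_cases hi : i = zF hn
    · rw [if_pos hi, hi, hgood.2.1]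
    · rw [if_neg hi]
      rcases hgood.1 i with h1 | h1
      · rw [if_pos, h1]
        simp only [Finset.mem_filter, Finset.mem_univ, true_and]
        rw [eF_dF hn i hi, h1]
      · rw [if_neg, h1]
        simp only [Finset.mem_filter, Finset.mem_univ, true_and]
        rw [eF_dF hn i hi, h1]
        norm_num
  · intro A hA
    ext x
    simp only [Finset.mem_filter, Finset.mem_univ, true_and]
    beta_reduce
    rw [if_neg (eF_ne hn x), dF_eF]
    by_cases hx : x ∈ A
    · simp [hx]
    · simp [hx]
      norm_num

end Aux


theorem stmt_15 (n : ℕ) (hn : 0 < n) (hev : Even n) (hnp : ¬ ∃ k : ℕ, n = 2 ^ k)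
    (V₀ : Finset (Fin n → ℝ))
    (hV₀ : ∀ v : Fin n → ℝ,
      v ∈ V₀ ↔ ((∀ i, v i = 1 ∨ v i = -1) ∧ v ⟨0, by omega⟩ = 1 ∧ (∑ i, v i) = 0)) :
    ∃ ε : (Fin n → ℝ) → ℝ, (∀ v ∈ V₀, ε v = 1 ∨ ε v = -1) ∧
      ∑ v ∈ V₀, ε v • v = 0 := by
  classical
  obtain ⟨r0, hr0⟩ := hev
  have h6 : 6 ≤ n := by
    by_contra h
    push_neg at h
    interval_cases n <;> first | omega | exact hnp ⟨1, rfl⟩ | exact hnp ⟨2, rfl⟩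
  haveI : NeZero (n-1) := ⟨by omega⟩
  have hgood : ∀ v, v ∈ V₀ ↔ Good h6 v := fun v => (hV₀ v).trans Iff.rfl
  set 𝒪 : Finset (Finset (Fin n → ℝ)) := V₀.image (OrbF h6) with h𝒪
  have hdisj : ∀ A ∈ 𝒪, ∀ B ∈ 𝒪, A ≠ B → Disjoint A B := by
    intro A hA B hB hne
    rw [h𝒪, Finset.mem_image] at hA hB
    obtain ⟨v, hv, rfl⟩ := hA
    obtain ⟨w, hw, rfl⟩ := hB
    rw [Finset.disjoint_left]
    intro u hu hu'
    exact hne (by rw [← OrbF_eq_of_mem h6 v u hu, ← OrbF_eq_of_mem h6 w u hu'])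
  have hcover : V₀ = 𝒪.biUnion (fun A => A) := by
    ext v
    simp only [Finset.mem_biUnion, h𝒪, Finset.mem_image]
    constructor
    · intro hv
      exact ⟨OrbF h6 v, ⟨v, hv, rfl⟩, mem_OrbF_self h6 v⟩
    · rintro ⟨A, ⟨w, hw, rfl⟩, hv⟩
      exact (hgood v).mpr (OrbF_good h6 w v ((hgood w).mp hw) hv)
  have hcardsum : V₀.card = 𝒪.card * (n-1) := by
    rw [hcover, Finset.card_biUnion hdisj]
    have : ∀ A ∈ 𝒪, (A : Finset (Fin n → ℝ)).card = n - 1 := by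
      intro A hA
      rw [h𝒪, Finset.mem_image] at hA
      obtain ⟨v, hv, rfl⟩ := hA
      exact OrbF_card h6 v ((hgood v).mp hv)
    rw [Finset.sum_congr rfl this, Finset.sum_const, smul_eq_mul]
  have hVcard : V₀.card = (n-1).choose ((n-2)/2) := good_card h6 ⟨n/2, by omega⟩ V₀ hgood
  have hdvd : 2 ∣ V₀.card := by
    have h1 : n - 1 = 2*(n/2) - 1 := by omega
    have h2 : (n-2)/2 = n/2 - 1 := by omega
    rw [hVcard, h1, h2]
    refine two_dvd_choose_aux (n/2) (by omega) ?_
    intro k hk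
    exact hnp ⟨k+1, by rw [pow_succ]; omega⟩
  have hNdvd : 2 ∣ 𝒪.card := by
    have hcop : Nat.Coprime 2 (n-1) := Nat.prime_two.coprime_iff_not_dvd.mpr (by omega)
    exact hcop.dvd_of_dvd_mul_right (hcardsum ▸ hdvd)
  obtain ⟨Sh, hSh_sub, hSh_card⟩ := Finset.exists_subset_card_eq (s := 𝒪) (n := 𝒪.card / 2)
    (Nat.div_le_self _ _)
  refine ⟨fun v => if OrbF h6 v ∈ Sh then 1 else -1, fun v _ => by
    by_cases h : OrbF h6 v ∈ Sh <;> simp [h], ?_⟩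
  have hzero : ∑ A ∈ 𝒪, (if A ∈ Sh then (1:ℝ) else -1) = 0 := by
    have h1 : 𝒪.filter (fun A => A ∈ Sh) = Sh := by
      ext A
      simp only [Finset.mem_filter, and_iff_right_iff_imp]
      exact fun hA => hSh_sub hA
    have h2 : (𝒪.filter (fun A => ¬ A ∈ Sh)).card = 𝒪.card - Sh.card := by
      have := Finset.card_filter_add_card_filter_not (s := 𝒪)
        (p := fun A => A ∈ Sh)
      rw [h1] at this
      omega
    rw [Finset.sum_ite, Finset.sum_const, Finset.sum_const, h1, h2, hSh_card]
    have h3 : 𝒪.card - 𝒪.card/2 = 𝒪.card/2 := by omega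
    rw [h3]
    simp [nsmul_eq_mul]
  calc ∑ v ∈ V₀, (fun v => if OrbF h6 v ∈ Sh then (1:ℝ) else -1) v • v
      = ∑ A ∈ 𝒪, ∑ v ∈ A, (if OrbF h6 v ∈ Sh then (1:ℝ) else -1) • v := by
        rw [hcover, Finset.sum_biUnion (fun A hA B hB hne => hdisj A hA B hB hne)]
    _ = ∑ A ∈ 𝒪, (if A ∈ Sh then (1:ℝ) else -1) •
          (fun i => if i = zF h6 then ((n-1 : ℕ) : ℝ) else -1) := by
        apply Finset.sum_congr rfl
        intro A hA
        rw [h𝒪, Finset.mem_image] at hA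
        obtain ⟨r, hr, rfl⟩ := hA
        have hstep : ∀ v ∈ OrbF h6 r,
            (if OrbF h6 v ∈ Sh then (1:ℝ) else -1) • v
              = (if OrbF h6 r ∈ Sh then (1:ℝ) else -1) • v := fun v hv => by
          rw [OrbF_eq_of_mem h6 r v hv]
        rw [Finset.sum_congr rfl hstep, ← Finset.smul_sum,
          OrbF_sum h6 r ((hgood r).mp hr)]
    _ = (∑ A ∈ 𝒪, (if A ∈ Sh then (1:ℝ) else -1)) •
          (fun i => if i = zF h6 then ((n-1 : ℕ) : ℝ) else -1) := by
        rw [Finset.sum_smul]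
    _ = 0 := by rw [hzero, zero_smul]
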